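/- Define x : ℕ → ℝ by x 0 = 1 − √3/2 and x (i+1) = 2·(x i)² / (1 − √3·(x i) + √(1 − 2√3·(x i) − (x i)²)); define d i = √((x (i+1))²/4 + (x i + (√3/2)·x (i+1))²), θ i = 2·arcsin(d i / 2), and a i = (x i · x (i+1))/4 − (θ i − sin (θ i))/2. Then 4.288·10⁻⁴⁰ < a 4 < 4.289·10⁻⁴⁰. -/

import Mathlib

noncomputable section

/-- Hansen's recursively defined sequence of distances, in the numerically stable form. -/
def xseq : ℕ → ℝ
  | 0 => 1 - Real.sqrt 3 / 2
  | i + 1 => 2 * (xseq i) ^ 2 /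
      (1 - Real.sqrt 3 * xseq i + Real.sqrt (1 - 2 * Real.sqrt 3 * xseq i - (xseq i) ^ 2))

/-- The chord length of the arc in Hansen's sliver region. -/
def dseq (i : ℕ) : ℝ :=
  Real.sqrt ((xseq (i + 1)) ^ 2 / 4 + (xseq i + Real.sqrt 3 / 2 * xseq (i + 1)) ^ 2)

/-- The angle subtended by the chord at the center of the unit circle. -/
def θseq (i : ℕ) : ℝ := 2 * Real.arcsin (dseq i / 2)

/-- The area of the region bounded by two line segments of lengths `x i` and `x (i+1)`
meeting at an interior angle of 150°, and an arc of a circle of radius 1. -/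
def aseq (i : ℕ) : ℝ := xseq i * xseq (i + 1) / 4 - (θseq i - Real.sin (θseq i)) / 2

lemma next_bounds {s x lo hi sa sb rlo rhi nlo nhi : ℝ}
    (hsl : sa < s) (hsh : s < sb) (hsa : 0 < sa)
    (hxl : lo < x) (hxh : x < hi) (hlo : 0 < lo)
    (hrlo : 0 ≤ rlo) (hrhi : 0 < rhi)
    (h1 : rlo ^ 2 < 1 - 2 * sb * hi - hi ^ 2)
    (h2 : 1 - 2 * sa * lo - lo ^ 2 < rhi ^ 2)
    (h3 : 0 < 1 - sb * hi + rlo)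
    (h4 : nlo * (1 - sa * lo + rhi) < 2 * lo ^ 2)
    (h5 : 2 * hi ^ 2 < nhi * (1 - sb * hi + rlo))
    (h6 : 0 ≤ nlo) :
    nlo < 2 * x ^ 2 / (1 - s * x + Real.sqrt (1 - 2 * s * x - x ^ 2)) ∧
      2 * x ^ 2 / (1 - s * x + Real.sqrt (1 - 2 * s * x - x ^ 2)) < nhi := by
  have hx0 : 0 < x := hlo.trans hxl
  have hs0 : 0 < s := hsa.trans hsl
  have hsxl : sa * lo < s * x := by nlinarith
  have hsxh : s * x < sb * hi := by nlinarith
  have hq : x ^ 2 < hi ^ 2 := by nlinarith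
  have hq2 : lo ^ 2 < x ^ 2 := by nlinarith
  have hinl : rlo < Real.sqrt (1 - 2 * s * x - x ^ 2) :=
    Real.lt_sqrt_of_sq_lt (by nlinarith)
  have hinh : Real.sqrt (1 - 2 * s * x - x ^ 2) < rhi :=
    (Real.sqrt_lt' hrhi).mpr (by nlinarith)
  have hD : 0 < 1 - s * x + Real.sqrt (1 - 2 * s * x - x ^ 2) := by nlinarith
  have hDub : 1 - s * x + Real.sqrt (1 - 2 * s * x - x ^ 2) < 1 - sa * lo + rhi := by linarith
  have hDlb : 1 - sb * hi + rlo < 1 - s * x + Real.sqrt (1 - 2 * s * x - x ^ 2) := by linarith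
  have hhi0 : 0 < hi := hx0.trans hxh
  have hnhi : 0 < nhi := by
    by_contra hc
    push_neg at hc
    have := mul_nonpos_of_nonpos_of_nonneg hc h3.le
    nlinarith
  constructor
  · rw [lt_div_iff₀ hD]
    linarith [mul_le_mul_of_nonneg_left hDub.le h6]
  · rw [div_lt_iff₀ hD]
    linarith [mul_le_mul_of_nonneg_left hDlb.le hnhi.le]

set_option maxHeartbeats 4000000 in
/-- Bounds on the area `a₄` in Hansen's construction. -/
theorem hansen_a4_area : 4.288e-40 < aseq 4 ∧ aseq 4 < 4.289e-40 := by
  have hs3l : (1.7320508075688 : ℝ) < Real.sqrt 3 := Real.lt_sqrt_of_sq_lt (by norm_num)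
  have hs3h : Real.sqrt 3 < (1.7320508075689 : ℝ) := (Real.sqrt_lt' (by norm_num)).mpr (by norm_num)
  have h0 : (0.13397459621555 : ℝ) < xseq 0 ∧ xseq 0 < (0.1339745962156 : ℝ) := by
    rw [xseq]
    constructor <;> linarith
  have h1 : (0.024131160666452 : ℝ) < xseq 1 ∧ xseq 1 < (0.024131160666478 : ℝ) := by
    rw [xseq]
    exact next_bounds (rlo := 0.71968687109809) (rhi := 0.71968687109826)
      hs3l hs3h (by norm_num) h0.1 h0.2 (by norm_num) (by norm_num) (by norm_num)
      (by norm_num) (by norm_num) (by norm_num) (by norm_num) (by norm_num) (by norm_num)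
  have h2 : (0.00060809904839105 : ℝ) < xseq 2 ∧ xseq 2 < (0.00060809904839243 : ℝ) := by
    rw [xseq]
    exact next_bounds (rlo := 0.95698740558326) (rhi := 0.95698740558332)
      hs3l hs3h (by norm_num) h1.1 h1.2 (by norm_num) (by norm_num) (by norm_num)
      (by norm_num) (by norm_num) (by norm_num) (by norm_num) (by norm_num) (by norm_num)
  have h3 : (3.7017447908050e-7 : ℝ) < xseq 3 ∧ xseq 3 < (3.7017447908221e-7 : ℝ) := by
    rw [xseq]
    exact next_bounds (rlo := 0.99894600120318) (rhi := 0.99894600120320)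
      hs3l hs3h (by norm_num) h2.1 h2.2 (by norm_num) (by norm_num) (by norm_num)
      (by norm_num) (by norm_num) (by norm_num) (by norm_num) (by norm_num) (by norm_num)
  have h4 : (1.3702923282033e-13 : ℝ) < xseq 4 ∧ xseq 4 < (1.3702923282161e-13 : ℝ) := by
    rw [xseq]
    exact next_bounds (rlo := 0.99999935883871) (rhi := 0.99999935883873)
      hs3l hs3h (by norm_num) h3.1 h3.2 (by norm_num) (by norm_num) (by norm_num)
      (by norm_num) (by norm_num) (by norm_num) (by norm_num) (by norm_num) (by norm_num)
  have h5 : (1.8777010647331e-26 : ℝ) < xseq 5 ∧ xseq 5 < (1.8777010647684e-26 : ℝ) := by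
    rw [xseq]
    exact next_bounds (rlo := 0.99999999999975) (rhi := 0.99999999999977)
      hs3l hs3h (by norm_num) h4.1 h4.2 (by norm_num) (by norm_num) (by norm_num)
      (by norm_num) (by norm_num) (by norm_num) (by norm_num) (by norm_num) (by norm_num)
  -- bounds on dseq 4
  have hx4l := h4.1; have hx4h := h4.2; have hx5l := h5.1; have hx5h := h5.2
  clear h0 h1 h2 h3 h4 h5
  have hm1 : (1.7320508075688 : ℝ) * 1.8777010647331e-26 < Real.sqrt 3 * xseq 5 :=
    mul_lt_mul'' hs3l hx5l (by norm_num) (by norm_num)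
  have hm2 : Real.sqrt 3 * xseq 5 < (1.7320508075689 : ℝ) * 1.8777010647684e-26 :=
    mul_lt_mul'' hs3h hx5h (Real.sqrt_nonneg 3) (by linarith)
  have hyl : (1.3702923282033e-13 : ℝ) + 1.7320508075688 / 2 * 1.8777010647331e-26 < xseq 4 + Real.sqrt 3 / 2 * xseq 5 := by
    linarith
  have hyh : xseq 4 + Real.sqrt 3 / 2 * xseq 5 < (1.3702923282161e-13 : ℝ) + 1.7320508075689 / 2 * 1.8777010647684e-26 := by
    linarith
  have hysql : ((1.3702923282033e-13 : ℝ) + 1.7320508075688 / 2 * 1.8777010647331e-26) ^ 2 < (xseq 4 + Real.sqrt 3 / 2 * xseq 5) ^ 2 :=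
    pow_lt_pow_left₀ hyl (by norm_num) two_ne_zero
  have hysqh : (xseq 4 + Real.sqrt 3 / 2 * xseq 5) ^ 2 < ((1.3702923282161e-13 : ℝ) + 1.7320508075689 / 2 * 1.8777010647684e-26) ^ 2 :=
    pow_lt_pow_left₀ hyh (by linarith [Real.sqrt_nonneg 3]) two_ne_zero
  have hx5sql : ((1.8777010647331e-26 : ℝ)) ^ 2 < (xseq 5) ^ 2 :=
    pow_lt_pow_left₀ hx5l (by norm_num) two_ne_zero
  have hx5sqh : (xseq 5) ^ 2 < ((1.8777010647684e-26 : ℝ)) ^ 2 :=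
    pow_lt_pow_left₀ hx5h (by linarith) two_ne_zero
  have hdl : (1.3702923282034e-13 : ℝ) < dseq 4 := by
    unfold dseq
    refine Real.lt_sqrt_of_sq_lt ?_
    linarith
  have hdh : dseq 4 < (1.3702923282163e-13 : ℝ) := by
    unfold dseq
    refine (Real.sqrt_lt' (by norm_num)).mpr ?_
    linarith
  clear hm1 hm2 hyl hyh hysql hysqh hx5sql hx5sqh
  -- bounds on arcsin (dseq 4 / 2)
  set t := dseq 4 / 2 with htdef
  have htl : (6.851461641017e-14 : ℝ) < t := by rw [htdef]; linarith
  have hth : t < (6.8514616410815e-14 : ℝ) := by rw [htdef]; linarith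
  have ht0 : 0 < t := by linarith
  clear hdl hdh
  set A := Real.arcsin t with hAdef
  have hA0 : 0 < A := Real.arcsin_pos.mpr ht0
  have hsinA : Real.sin A = t := Real.sin_arcsin (by linarith) (by linarith)
  have hpi : (3 : ℝ) < Real.pi := Real.pi_gt_three
  have hAle : A ≤ Real.pi / 2 := Real.arcsin_le_pi_div_two t
  have hA1 : A < 1 := by
    by_contra h
    push_neg at h
    have h1mem : (1 : ℝ) ∈ Set.Icc (-(Real.pi / 2)) (Real.pi / 2) := by
      constructor <;> linarith
    have hAmem : A ∈ Set.Icc (-(Real.pi / 2)) (Real.pi / 2) := by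
      constructor <;> linarith
    have hmono := Real.strictMonoOn_sin.monotoneOn h1mem hAmem h
    have hsin1 : (3 : ℝ) / 4 < Real.sin 1 := by
      have := Real.sin_gt_sub_cube one_pos
      norm_num at this
      linarith
    rw [hsinA] at hmono
    linarith
  have hAabs : |A| ≤ 1 := by rw [abs_of_pos hA0]; exact hA1.le
  have hbA := abs_le.mp (Real.sin_bound hAabs)
  rw [hsinA, abs_of_pos hA0] at hbA
  have hA3 : A ^ 3 ≤ A := by
    nlinarith [mul_pos (mul_pos hA0 (sub_pos.mpr hA1)) (show (0:ℝ) < 1 + A by linarith)]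
  have hA4 : A ^ 4 ≤ A := by
    nlinarith [mul_pos (pow_pos hA0 3) (sub_pos.mpr hA1)]
  have hAcrude : A < 8.8e-14 := by linarith [hbA.1, show A ^ 5 ≤ A by nlinarith [mul_le_mul_of_nonneg_left hA4 hA0.le, mul_pos hA0 (sub_pos.mpr hA1)]]
  have hA3b : A ^ 3 < (8.8e-14 : ℝ) ^ 3 := pow_lt_pow_left₀ hAcrude hA0.le (by norm_num)
  have hA4b : A ^ 4 < (8.8e-14 : ℝ) ^ 4 := pow_lt_pow_left₀ hAcrude hA0.le (by norm_num)
  have hAub : A < (6.8514616410815e-14 : ℝ) + (6.8514616410815e-14 : ℝ) ^ 3 := by nlinarith [hbA.1]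
  have hAlb : (6.851461641017e-14 : ℝ) < A := by
    have := Real.sin_lt hA0
    rw [hsinA] at this
    linarith
  clear hbA hA3 hA4 hAcrude hA3b hA4b hAabs hA1 hAle hsinA hA0 htl hth ht0
  -- bounds on θseq 4
  have hθl : (1.3702923282034e-13 : ℝ) < θseq 4 := by
    unfold θseq
    rw [← htdef, ← hAdef]
    linarith
  have hθh : θseq 4 < (1.3702923282164e-13 : ℝ) := by
    unfold θseq
    rw [← htdef, ← hAdef]
    linarith
  clear hAub hAlb
  set θ := θseq 4 with hθdef
  have hθ0 : 0 < θ := by linarith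
  have hθabs : |θ| ≤ 1 := by rw [abs_of_pos hθ0]; linarith
  have hbθ := abs_le.mp (Real.sin_bound hθabs)
  rw [abs_of_pos hθ0] at hbθ
  have hθ3l : (1.3702923282034e-13 : ℝ) ^ 3 < θ ^ 3 := pow_lt_pow_left₀ hθl (by norm_num) (by norm_num)
  have hθ3h : θ ^ 3 < (1.3702923282164e-13 : ℝ) ^ 3 := pow_lt_pow_left₀ hθh hθ0.le (by norm_num)
  have hθ4h : θ ^ 4 < (1.3702923282164e-13 : ℝ) ^ 4 := pow_lt_pow_left₀ hθh hθ0.le (by norm_num)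
  have hθ40 : 0 < θ ^ 4 := by positivity
  have hml : (4.2883322727716e-40 : ℝ) < θ - Real.sin θ := by nlinarith [hbθ.2]
  have hmh : θ - Real.sin θ < (4.2883322728941e-40 : ℝ) := by nlinarith [hbθ.1]
  -- final assembly
  have hp1 : xseq 4 * xseq 5 < (1.3702923282161e-13 : ℝ) * 1.8777010647684e-26 :=
    mul_lt_mul'' hx4h hx5h (by linarith) (by linarith)
  have hp2 : (1.3702923282033e-13 : ℝ) * 1.8777010647331e-26 < xseq 4 * xseq 5 :=
    mul_lt_mul'' hx4l hx5l (by norm_num) (by norm_num)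
  have ha : aseq 4 = xseq 4 * xseq 5 / 4 - (θ - Real.sin θ) / 2 := rfl
  rw [ha]
  constructor
  · linarith
  · linarith
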